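/- Every real tensor X of shape n_1 × … × n_d admits an exact Tucker decomposition whose ranks equal the ranks of its unfoldings: setting r_k = rank(X_(k)) for k = 1,…,d, there exist a core tensor G of shape r_1 × … × r_d and factor matrices U_k ∈ ℝ^{n_k × r_k} (which may moreover be chosen with orthonormal columns) such that X = G ×_1 U_1 ×_2 … ×_d U_d. -/

import Mathlib

open scoped BigOperators
open Matrix

/-- A `d`-dimensional real tensor of shape `n 0 × ⋯ × n (d-1)`. -/
abbrev Tensor {d : ℕ} (n : Fin d → ℕ) : Type := (∀ i, Fin (n i)) → ℝ

/-- The mode-`k` unfolding of a tensor: rows indexed by the `k`-th index,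
columns indexed by the remaining multi-index. -/
def modeUnfold {d : ℕ} {n : Fin d → ℕ} (X : Tensor n) (k : Fin d) :
    Matrix (Fin (n k)) (∀ i : {j : Fin d // j ≠ k}, Fin (n i.1)) ℝ :=
  fun a b => X fun i =>
    if h : i = k then Fin.cast (congrArg n h).symm a else b ⟨i, h⟩

/-- The Tucker decomposition `G ×₁ U 1 ×₂ ⋯ ×_d U d` of a core tensor `G` of
shape `r` with factor matrices `U k ∈ ℝ^{n k × r k}`, written entrywise. -/
def tuckerEval {d : ℕ} {n r : Fin d → ℕ} (G : Tensor r)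
    (U : ∀ k, Matrix (Fin (n k)) (Fin (r k)) ℝ) : Tensor n :=
  fun i => ∑ j : ∀ k, Fin (r k), (∏ k, U k (i k) (j k)) * G j

/-- Existence of an orthonormal family spanning the column space. -/
lemma tucker_proj_exists {m : ℕ} {c : Type*} [Fintype c] [DecidableEq c]
    (A : Matrix (Fin m) c ℝ) :
    ∃ U : Matrix (Fin m) (Fin A.rank) ℝ, Uᵀ * U = 1 ∧
      ∀ i b, (∑ j, U i j * ∑ a, U a j * A a b) = A i b := by
  classical
  set W : Submodule ℝ (EuclideanSpace ℝ (Fin m)) :=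
    Submodule.map ((WithLp.linearEquiv 2 ℝ (Fin m → ℝ)).symm :
      (Fin m → ℝ) →ₗ[ℝ] EuclideanSpace ℝ (Fin m)) (LinearMap.range A.mulVecLin) with hW
  haveI : FiniteDimensional ℝ W := FiniteDimensional.finiteDimensional_submodule W
  have hr : Module.finrank ℝ W = A.rank := LinearEquiv.finrank_map_eq _ _
  obtain ⟨b⟩ : Nonempty (OrthonormalBasis (Fin A.rank) ℝ W) :=
    ⟨(stdOrthonormalBasis ℝ W).reindex (finCongr hr)⟩
  refine ⟨fun i j => (b j : EuclideanSpace ℝ (Fin m)) i, ?_, ?_⟩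
  · ext j j'
    have hon := b.orthonormal
    rw [orthonormal_iff_ite] at hon
    have h := hon j j'
    rw [Submodule.coe_inner, PiLp.inner_apply] at h
    show ∑ x, (b j : EuclideanSpace ℝ (Fin m)) x * (b j' : EuclideanSpace ℝ (Fin m)) x
      = (1 : Matrix (Fin A.rank) (Fin A.rank) ℝ) j j'
    rw [Matrix.one_apply]
    simpa [mul_comm] using h
  · intro i bb
    have hx : WithLp.toLp 2 (fun i' => A i' bb) ∈ W := by
      refine Submodule.mem_map_of_mem (p := LinearMap.range A.mulVecLin) ⟨Pi.single bb 1, ?_⟩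
      funext i'
      simp [Matrix.mulVecLin_apply]
    have h := b.sum_repr' ⟨WithLp.toLp 2 (fun i' => A i' bb), hx⟩
    have h3 := congrArg (fun v : W => (v : EuclideanSpace ℝ (Fin m)) i) h
    simp only [Submodule.coe_inner, PiLp.inner_apply, RCLike.inner_apply] at h3
    simp only [AddSubmonoidClass.coe_finset_sum] at h3
    rw [WithLp.ofLp_sum, Finset.sum_apply] at h3
    simp only [SetLike.val_smul, WithLp.ofLp_smul, Pi.smul_apply, smul_eq_mul] at h3
    rw [← h3]
    refine Finset.sum_congr rfl fun j _ => ?_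
    rw [mul_comm]
    congr 1
    refine Finset.sum_congr rfl fun a _ => ?_
    simp only [starRingEnd_apply, star_trivial]
    exact mul_comm _ _

lemma tucker_reindex_sum {d : ℕ} {n : Fin d → ℕ} (k : Fin d)
    (f : (∀ j, Fin (n j)) → ℝ) :
    ∑ m, f m = ∑ a : Fin (n k), ∑ q : ∀ j : {j : Fin d // j ≠ k}, Fin (n j.1),
      f ((Equiv.piSplitAt k (fun j => Fin (n j))).symm (a, q)) := by
  rw [← Equiv.sum_comp (Equiv.piSplitAt k (fun j => Fin (n j))).symm f,
    Fintype.sum_prod_type]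

lemma tucker_split_symm_apply_self {d : ℕ} {n : Fin d → ℕ} (k : Fin d)
    (a : Fin (n k)) (q : ∀ j : {j : Fin d // j ≠ k}, Fin (n j.1)) :
    (Equiv.piSplitAt k (fun j => Fin (n j))).symm (a, q) k = a := by
  simp [Equiv.piSplitAt]

lemma tucker_split_symm_apply_ne {d : ℕ} {n : Fin d → ℕ} (k : Fin d)
    (a : Fin (n k)) (q : ∀ j : {j : Fin d // j ≠ k}, Fin (n j.1)) (j : Fin d) (h : j ≠ k) :
    (Equiv.piSplitAt k (fun j => Fin (n j))).symm (a, q) j = q ⟨j, h⟩ := by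
  simp [Equiv.piSplitAt, dif_neg h]

lemma tucker_split_symm_update {d : ℕ} {n : Fin d → ℕ} (k : Fin d)
    (a : Fin (n k)) (q : ∀ j : {j : Fin d // j ≠ k}, Fin (n j.1)) (b : Fin (n k)) :
    Function.update ((Equiv.piSplitAt k (fun j => Fin (n j))).symm (a, q)) k b
      = (Equiv.piSplitAt k (fun j => Fin (n j))).symm (b, q) := by
  funext j
  rcases eq_or_ne j k with h | h
  · subst h; simp [Equiv.piSplitAt]
  · simp [Equiv.piSplitAt, Function.update_of_ne h, dif_neg h]

/-- If each `P k` fixes the tensor in mode `k`, then the full multilinear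
application of all the `P k` fixes the tensor. -/
lemma tucker_key {d : ℕ} {n : Fin d → ℕ} (X : Tensor n)
    (P : ∀ k, Matrix (Fin (n k)) (Fin (n k)) ℝ)
    (hP : ∀ k (i : ∀ j, Fin (n j)),
      ∑ a, P k (i k) a * X (Function.update i k a) = X i)
    (i : ∀ j, Fin (n j)) :
    ∑ m, (∏ k, P k (i k) (m k)) * X m = X i := by
  classical
  suffices h : ∀ S : Finset (Fin d),
      ∑ m, (∏ k, if k ∈ S then P k (i k) (m k)
        else if m k = i k then (1:ℝ) else 0) * X m = X i by
    simpa using h Finset.univ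
  intro S
  induction S using Finset.induction_on with
  | empty =>
      have hprod : ∀ m : ∀ j, Fin (n j),
          (∏ k, if k ∈ (∅ : Finset (Fin d)) then P k (i k) (m k)
            else if m k = i k then (1:ℝ) else 0) = if m = i then 1 else 0 := by
        intro m
        simp only [Finset.notMem_empty, if_false]
        by_cases hmi : m = i
        · subst hmi; simp
        · rw [if_neg hmi]
          obtain ⟨j, hj⟩ : ∃ j, m j ≠ i j := by
            by_contra hcon
            push_neg at hcon
            exact hmi (funext hcon)
          exact Finset.prod_eq_zero (Finset.mem_univ j) (by rw [if_neg hj])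
      simp only [hprod, ite_mul, one_mul, zero_mul]
      simp
  | @insert k S hk ih =>
      set e := Equiv.piSplitAt k (fun j => Fin (n j)) with he
      have hsplit : ∀ (T : Finset (Fin d)) (a : Fin (n k))
          (q : ∀ j : {j : Fin d // j ≠ k}, Fin (n j.1)),
          (∏ j, if j ∈ T then P j (i j) (e.symm (a, q) j)
            else if e.symm (a, q) j = i j then (1:ℝ) else 0)
          = (if k ∈ T then P k (i k) a else if a = i k then (1:ℝ) else 0) *
            ∏ j : {j : Fin d // j ≠ k},
              (if j.1 ∈ T then P j.1 (i j.1) (q j)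
                else if q j = i j.1 then (1:ℝ) else 0) := by
        intro T a q
        rw [Fintype.prod_eq_mul_prod_compl k]
        congr 1
        · rw [tucker_split_symm_apply_self]
        · rw [Finset.prod_subtype (p := fun j => j ≠ k) ({k}ᶜ : Finset (Fin d)) (by simp)
            (fun j => if j ∈ T then P j (i j) (e.symm (a, q) j)
              else if e.symm (a, q) j = i j then (1:ℝ) else 0)]
          refine Finset.prod_congr rfl fun j _ => ?_
          rw [tucker_split_symm_apply_ne k a q j.1 j.2]
      set w' : (∀ j : {j : Fin d // j ≠ k}, Fin (n j.1)) → ℝ := fun q =>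
        ∏ j : {j : Fin d // j ≠ k},
          (if j.1 ∈ S then P j.1 (i j.1) (q j)
            else if q j = i j.1 then (1:ℝ) else 0) with hw'
      have hB : ∀ q, ∑ a, P k (i k) a * X (e.symm (a, q)) = X (e.symm (i k, q)) := by
        intro q
        have := hP k (e.symm (i k, q))
        rw [tucker_split_symm_apply_self] at this
        calc ∑ a, P k (i k) a * X (e.symm (a, q))
            = ∑ a, P k (i k) a * X (Function.update (e.symm (i k, q)) k a) := by
              refine Finset.sum_congr rfl fun a _ => ?_
              rw [tucker_split_symm_update]
          _ = X (e.symm (i k, q)) := this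
      have hA : ∑ m, (∏ j, if j ∈ insert k S then P j (i j) (m j)
            else if m j = i j then (1:ℝ) else 0) * X m
          = ∑ q, w' q * X (e.symm (i k, q)) := by
        rw [tucker_reindex_sum k]
        rw [Finset.sum_comm]
        refine Finset.sum_congr rfl fun q _ => ?_
        rw [← hB q, Finset.mul_sum]
        refine Finset.sum_congr rfl fun a _ => ?_
        rw [hsplit (insert k S) a q, if_pos (Finset.mem_insert_self k S), hw']
        have : (∏ j : {j : Fin d // j ≠ k},
            (if j.1 ∈ insert k S then P j.1 (i j.1) (q j)
              else if q j = i j.1 then (1:ℝ) else 0)) = w' q := by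
          refine Finset.prod_congr rfl fun j _ => ?_
          congr 1
          simp [Finset.mem_insert, j.2]
        rw [this]
        ring
      have hC : ∑ m, (∏ j, if j ∈ S then P j (i j) (m j)
            else if m j = i j then (1:ℝ) else 0) * X m
          = ∑ q, w' q * X (e.symm (i k, q)) := by
        rw [tucker_reindex_sum k]
        rw [Finset.sum_comm]
        refine Finset.sum_congr rfl fun q _ => ?_
        have hterm : ∀ a, (∏ j, if j ∈ S then P j (i j) (e.symm (a, q) j)
              else if e.symm (a, q) j = i j then (1:ℝ) else 0) * X (e.symm (a, q))
            = (if a = i k then (1:ℝ) else 0) * (w' q * X (e.symm (a, q))) := by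
          intro a
          rw [hsplit S a q, if_neg hk]
          ring
        rw [Finset.sum_congr rfl fun a _ => hterm a]
        simp
      rw [hA, ← hC, ih]

lemma tucker_modeUnfold_restrict {d : ℕ} {n : Fin d → ℕ} (X : Tensor n) (k : Fin d)
    (i : ∀ j, Fin (n j)) (a : Fin (n k)) :
    modeUnfold X k a (fun j => i j.1) = X (Function.update i k a) := by
  unfold modeUnfold
  congr 1
  funext j
  rcases eq_or_ne j k with h | h
  · subst h; simp
  · simp [dif_neg h, Function.update_of_ne h]

lemma tucker_key_step {d : ℕ} {n : Fin d → ℕ} (X : Tensor n) (k : Fin d)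
    (U : Matrix (Fin (n k)) (Fin ((modeUnfold X k).rank)) ℝ)
    (hU : ∀ i b, (∑ j, U i j * ∑ a, U a j * modeUnfold X k a b) = modeUnfold X k i b)
    (i : ∀ j, Fin (n j)) :
    ∑ a, (∑ j, U (i k) j * U a j) * X (Function.update i k a) = X i := by
  have h1 : ∀ a, X (Function.update i k a) = modeUnfold X k a (fun j => i j.1) := by
    intro a; rw [tucker_modeUnfold_restrict]
  have h2 : X i = modeUnfold X k (i k) (fun j => i j.1) := by
    rw [tucker_modeUnfold_restrict, Function.update_eq_self]
  rw [h2, ← hU (i k) (fun j => i j.1)]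
  simp only [h1, Finset.sum_mul]
  rw [Finset.sum_comm]
  refine Finset.sum_congr rfl fun j _ => ?_
  rw [Finset.mul_sum]
  refine Finset.sum_congr rfl fun a _ => ?_
  ring

lemma tucker_sum_prod_swap {d : ℕ} {r : Fin d → ℕ} (h : ∀ k, Fin (r k) → ℝ) :
    ∑ j : ∀ k, Fin (r k), ∏ k, h k (j k) = ∏ k, ∑ a, h k a := by
  rw [Finset.prod_univ_sum, Fintype.piFinset_univ]

/-- every tensor admits an exact Tucker decomposition with ranks
`r k = rank (X₍ₖ₎)`, whose factors moreover have orthonormal columns. -/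
theorem tucker_exists {d : ℕ} {n : Fin d → ℕ} (X : Tensor n) :
    ∃ (G : Tensor (fun k => (modeUnfold X k).rank))
      (U : ∀ k, Matrix (Fin (n k)) (Fin ((modeUnfold X k).rank)) ℝ),
      (∀ k, (U k)ᵀ * U k = 1) ∧ X = tuckerEval G U := by
  classical
  have h := fun k => tucker_proj_exists (modeUnfold X k)
  choose U hU1 hU2 using h
  refine ⟨fun jj => ∑ m, (∏ k, U k (m k) (jj k)) * X m, U, hU1, ?_⟩
  funext i
  unfold tuckerEval
  have step1 : ∀ j : ∀ k, Fin ((modeUnfold X k).rank),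
      (∏ k, U k (i k) (j k)) * ∑ m, (∏ k, U k (m k) (j k)) * X m
      = ∑ m, (∏ k, U k (i k) (j k) * U k (m k) (j k)) * X m := by
    intro j
    rw [Finset.mul_sum]
    refine Finset.sum_congr rfl fun m _ => ?_
    rw [Finset.prod_mul_distrib]
    ring
  simp only [step1]
  rw [Finset.sum_comm]
  have step2 : ∀ m : ∀ j, Fin (n j),
      ∑ j : ∀ k, Fin ((modeUnfold X k).rank),
        (∏ k, U k (i k) (j k) * U k (m k) (j k)) * X m
      = (∏ k, ∑ a, U k (i k) a * U k (m k) a) * X m := by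
    intro m
    rw [← Finset.sum_mul, tucker_sum_prod_swap (fun k a => U k (i k) a * U k (m k) a)]
  simp only [step2]
  exact (tucker_key X (fun k => fun x y => ∑ j, U k x j * U k y j)
    (fun k i => tucker_key_step X k (U k) (hU2 k) i) i).symm
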